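/- Let (u^n)_{n≥0} (with u^{−1} = u^0) be generated by the algorithm with û^n = u^n: y^n satisfies ∇H^n(y^n) − ∇F^n(u^n) + M(y^n − u^n) = 0, d^n = y^n − u^n, λ_n ≥ 0 satisfies E^n(y^n + λ_n d^n) ≤ E^n(y^n) − α λ_n ‖d^n‖² with α > 0, and u^{n+1} = y^n + λ_n d^n. Assume h and f are Lipschitz continuous, E is bounded below, and λ_max := sup_n λ_n < √(4/(3 δt L) − 1/2) − 1. Then lim_{n→∞} ‖∇A(u^{n+1}, u^n)‖ = 0, where A(x,y) = E(x) + (L/2 + 1/(3δt))‖x − y‖². -/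

import Mathlib

open scoped RealInnerProductSpace
open Filter Topology

section AuxGrad
variable {X : Type*} [NormedAddCommGroup X] [InnerProductSpace ℝ X] [CompleteSpace X]

private lemma hasGradientAt_of_fderiv {φ : X → ℝ} {g x : X} {D : X →L[ℝ] ℝ}
    (hD : HasFDerivAt φ D x) (hg : ∀ w, D w = ⟪g, w⟫) : HasGradientAt φ g x := by
  rw [hasGradientAt_iff_hasFDerivAt]
  exact hD.congr_fderiv (by ext w; simp [InnerProductSpace.toDual_apply_apply, hg w])

private lemma HGA.add {φ ψ : X → ℝ} {g g' x : X} (hφ : HasGradientAt φ g x)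
    (hψ : HasGradientAt ψ g' x) : HasGradientAt (fun v => φ v + ψ v) (g + g') x := by
  apply hasGradientAt_of_fderiv
    ((hasGradientAt_iff_hasFDerivAt.mp hφ).add (hasGradientAt_iff_hasFDerivAt.mp hψ))
  intro w
  simp [inner_add_left]

private lemma HGA.sub {φ ψ : X → ℝ} {g g' x : X} (hφ : HasGradientAt φ g x)
    (hψ : HasGradientAt ψ g' x) : HasGradientAt (fun v => φ v - ψ v) (g - g') x := by
  apply hasGradientAt_of_fderiv
    ((hasGradientAt_iff_hasFDerivAt.mp hφ).sub (hasGradientAt_iff_hasFDerivAt.mp hψ))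
  intro w
  simp [inner_sub_left]

private lemma HGA.const_mul {φ : X → ℝ} {g x : X} (c : ℝ) (hφ : HasGradientAt φ g x) :
    HasGradientAt (fun v => c * φ v) (c • g) x := by
  apply hasGradientAt_of_fderiv ((hasGradientAt_iff_hasFDerivAt.mp hφ).const_mul c)
  intro w
  simp [real_inner_smul_left]

private lemma HGA.inner_const (b a x : X) :
    HasGradientAt (fun v => ⟪b, v - a⟫) b x := by
  have h1 : HasFDerivAt (fun v : X => (InnerProductSpace.toDual ℝ X b) v - ⟪b, a⟫)
      (InnerProductSpace.toDual ℝ X b) x :=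
    (InnerProductSpace.toDual ℝ X b).hasFDerivAt.sub_const _
  have h2 : (fun v : X => ⟪b, v - a⟫) =
      fun v : X => (InnerProductSpace.toDual ℝ X b) v - ⟪b, a⟫ := by
    funext v; simp [inner_sub_right]
  rw [hasGradientAt_iff_hasFDerivAt, h2]
  exact h1

private lemma HGA.normSq (a x : X) :
    HasGradientAt (fun v => ‖v - a‖ ^ 2) ((2:ℝ) • (x - a)) x := by
  have hid : HasFDerivAt (fun v : X => v - a) (ContinuousLinearMap.id ℝ X) x :=
    (hasFDerivAt_id x).sub_const a
  have h2 := hid.inner ℝ hid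
  have h3 : (fun v : X => ‖v - a‖ ^ 2) = fun v : X => ⟪v - a, v - a⟫ := by
    funext v; rw [real_inner_self_eq_norm_sq]
  rw [h3]
  apply hasGradientAt_of_fderiv h2
  intro w
  rw [real_inner_smul_left]
  simp [real_inner_smul_left, real_inner_comm]
  ring

private lemma line_hasDerivAt (v w : X) (t : ℝ) :
    HasDerivAt (fun s : ℝ => v + s • (w - v)) (w - v) t := by
  have h1 : HasDerivAt (fun s : ℝ => s • (w - v)) ((1:ℝ) • (w - v)) t :=
    (hasDerivAt_id t).smul_const (w - v)
  simpa using h1.const_add v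

private lemma comp_line_hasDerivAt {F : X → ℝ} {f : X → X}
    (hF : ∀ x, HasGradientAt F (f x) x) (v w : X) (t : ℝ) :
    HasDerivAt (fun s : ℝ => F (v + s • (w - v))) ⟪f (v + t • (w - v)), w - v⟫ t := by
  have h2 := hasGradientAt_iff_hasFDerivAt.mp (hF (v + t • (w - v)))
  have h3 := h2.comp_hasDerivAt t (line_hasDerivAt v w t)
  exact h3

private lemma convex_grad_ineq {H : X → ℝ} {h : X → X}
    (hH : ∀ x, HasGradientAt H (h x) x) (hc : ConvexOn ℝ Set.univ H) (v w : X) :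
    H v + ⟪h v, w - v⟫ ≤ H w := by
  set g : ℝ → ℝ := fun s => H (v + s • (w - v)) with hg
  have hline : ConvexOn ℝ Set.univ g := by
    have h0 := hc.comp_affineMap (AffineMap.lineMap v w : ℝ →ᵃ[ℝ] X)
    have : g = H ∘ (AffineMap.lineMap v w : ℝ →ᵃ[ℝ] X) := by
      funext s
      simp only [hg, Function.comp_apply, AffineMap.lineMap_apply_module]
      congr 1
      module
    rw [this]
    simpa using h0
  have hd : HasDerivAt g ⟪h v, w - v⟫ 0 := by
    have := comp_line_hasDerivAt hH v w 0
    simpa using this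
  have hs := hline.le_slope_of_hasDerivAt (Set.mem_univ (0:ℝ)) (Set.mem_univ (1:ℝ))
    zero_lt_one hd
  rw [slope_def_field] at hs
  have hg0 : g 0 = H v := by simp [hg]
  have hg1 : g 1 = H w := by simp [hg]
  rw [hg0, hg1] at hs
  simp at hs
  linarith

private lemma descent_lemma {F : X → ℝ} {f : X → X} (hF : ∀ x, HasGradientAt F (f x) x)
    {L : ℝ} (hL : 0 < L) (hLip : ∀ x y : X, ‖f x - f y‖ ≤ L * ‖x - y‖) (v w : X) :
    F w - F v - ⟪f v, w - v⟫ ≤ L / 2 * ‖w - v‖ ^ 2 := by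
  have hfc : Continuous f := by
    have : LipschitzWith (Real.toNNReal L) f := by
      apply LipschitzWith.of_dist_le_mul
      intro x y
      rw [dist_eq_norm, dist_eq_norm]
      simpa [Real.coe_toNNReal L hL.le] using hLip x y
    exact this.continuous
  set g : ℝ → ℝ := fun t => ⟪f (v + t • (w - v)), w - v⟫ with hgdef
  have hgc : Continuous g := by
    apply Continuous.inner
    · exact hfc.comp (by continuity)
    · exact continuous_const
  have hft := intervalIntegral.integral_eq_sub_of_hasDerivAt
    (f := fun t : ℝ => F (v + t • (w - v))) (f' := g) (a := 0) (b := 1)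
    (fun t _ => comp_line_hasDerivAt hF v w t) (hgc.intervalIntegrable 0 1)
  have hmono : ∫ t in (0:ℝ)..1, g t ≤
      ∫ t in (0:ℝ)..1, (⟪f v, w - v⟫ + L * ‖w - v‖ ^ 2 * t) := by
    apply intervalIntegral.integral_mono_on zero_le_one (hgc.intervalIntegrable 0 1)
    · exact (Continuous.intervalIntegrable (by continuity) 0 1)
    · intro t ht
      have hdiff : g t - ⟪f v, w - v⟫ = ⟪f (v + t • (w - v)) - f v, w - v⟫ := by
        rw [hgdef]; simp [inner_sub_left]
      have hcs : ⟪f (v + t • (w - v)) - f v, w - v⟫ ≤ ‖f (v + t • (w - v)) - f v‖ * ‖w - v‖ :=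
        real_inner_le_norm _ _
      have hlip2 : ‖f (v + t • (w - v)) - f v‖ ≤ L * (t * ‖w - v‖) := by
        have := hLip (v + t • (w - v)) v
        simpa [norm_smul, abs_of_nonneg ht.1] using this
      nlinarith [norm_nonneg (w - v), ht.1, hL.le]
  have hint : ∫ t in (0:ℝ)..1, (⟪f v, w - v⟫ + L * ‖w - v‖ ^ 2 * t)
      = ⟪f v, w - v⟫ + L / 2 * ‖w - v‖ ^ 2 := by
    rw [intervalIntegral.integral_add (intervalIntegrable_const)
      (Continuous.intervalIntegrable (by continuity) 0 1),
      intervalIntegral.integral_const_mul, integral_id]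
    simp
    ring
  rw [hft] at hmono
  rw [hint] at hmono
  simp at hmono
  linarith

private lemma prodL2_norm_le (q : WithLp 2 (X × X)) : ‖q‖ ≤ ‖q.fst‖ + ‖q.snd‖ := by
  have h1 : ‖q‖ ^ 2 = ‖q.fst‖ ^ 2 + ‖q.snd‖ ^ 2 := WithLp.prod_norm_sq_eq_of_L2 q
  nlinarith [norm_nonneg q, norm_nonneg q.fst, norm_nonneg q.snd,
    mul_nonneg (norm_nonneg q.fst) (norm_nonneg q.snd)]

private lemma norm_add6_le (t1 t2 t3 t4 t5 t6 : X) :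
    ‖t1 + t2 + t3 + t4 + t5 + t6‖ ≤ ‖t1‖ + ‖t2‖ + ‖t3‖ + ‖t4‖ + ‖t5‖ + ‖t6‖ := by
  calc ‖t1 + t2 + t3 + t4 + t5 + t6‖ ≤ ‖t1 + t2 + t3 + t4 + t5‖ + ‖t6‖ := norm_add_le _ _
    _ ≤ (‖t1 + t2 + t3 + t4‖ + ‖t5‖) + ‖t6‖ := by gcongr; exact norm_add_le _ _
    _ ≤ ((‖t1 + t2 + t3‖ + ‖t4‖) + ‖t5‖) + ‖t6‖ := by gcongr <;> exact norm_add_le _ _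
    _ ≤ (((‖t1 + t2‖ + ‖t3‖) + ‖t4‖) + ‖t5‖) + ‖t6‖ := by gcongr <;> exact norm_add_le _ _
    _ ≤ ((((‖t1‖ + ‖t2‖) + ‖t3‖) + ‖t4‖) + ‖t5‖) + ‖t6‖ := by gcongr <;> exact norm_add_le _ _

end AuxGrad

set_option maxHeartbeats 4000000 in
/-- Vanishing of the gradient of the auxiliary function
`A(x,y) = E(x) + (L/2 + 1/(3δt))‖x - y‖²` along the iterates of the algorithm with
`ûⁿ = uⁿ` (the convention `u⁻¹ = u⁰` is encoded by ℕ-subtraction in `u (n-1)`). -/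
theorem gradient_A_tendsto_zero_un
    {X : Type*} [NormedAddCommGroup X] [InnerProductSpace ℝ X] [FiniteDimensional ℝ X]
    (H : X → ℝ) (h : X → X) (hH : ∀ x : X, HasGradientAt H (h x) x)
    (hHconv : ConvexOn ℝ Set.univ H)
    (F : X → ℝ) (f : X → X) (hF : ∀ x : X, HasGradientAt F (f x) x)
    (L : ℝ) (hL : 0 < L) (hLip : ∀ x y : X, ‖f x - f y‖ ≤ L * ‖x - y‖)
    (Lh : ℝ) (hLh : 0 ≤ Lh) (hhLip : ∀ x y : X, ‖h x - h y‖ ≤ Lh * ‖x - y‖)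
    (δt : ℝ) (hδt : 0 < δt) (hδt2 : δt < 2 / (3 * L))
    (M : X →L[ℝ] X) (hMsym : ∀ x y : X, ⟪M x, y⟫ = ⟪x, M y⟫)
    (hMpsd : ∀ x : X, 0 ≤ ⟪M x, x⟫)
    (u y : ℕ → X) (lam : ℕ → ℝ) (α : ℝ) (hα : 0 < α)
    (Hn Fn En : ℕ → X → ℝ)
    (hHn : ∀ n : ℕ, ∀ v : X, Hn n v = H v + (1 / δt) * ‖v - u n‖ ^ 2)
    (hFn : ∀ n : ℕ, ∀ v : X, Fn n v = (1 / (3 * δt)) * ‖v - u (n - 1)‖ ^ 2 - F v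
      - ⟪f (u n) - f (u (n - 1)), v - u (n - 1)⟫)
    (hEn : ∀ n : ℕ, ∀ v : X, En n v = Hn n v - Fn n v)
    (hopt : ∀ n : ℕ, gradient (Hn n) (y n) - gradient (Fn n) (u n) + M (y n - u n) = 0)
    (hlam0 : ∀ n : ℕ, 0 ≤ lam n)
    (hls : ∀ n : ℕ, En n (y n + lam n • (y n - u n))
      ≤ En n (y n) - α * lam n * ‖y n - u n‖ ^ 2)
    (hupd : ∀ n : ℕ, u (n + 1) = y n + lam n • (y n - u n))
    (E : X → ℝ) (hE : ∀ v : X, E v = H v + F v)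
    (hEbdd : BddBelow (Set.range E))
    (lamMax : ℝ) (hlamMax : ∀ n : ℕ, lam n ≤ lamMax)
    (hlamBound : lamMax < Real.sqrt (4 / (3 * δt * L) - 1 / 2) - 1)
    (Afun : WithLp 2 (X × X) → ℝ)
    (hAfun : ∀ p : WithLp 2 (X × X),
      Afun p = E (WithLp.equiv 2 (X × X) p).1
        + (L / 2 + 1 / (3 * δt))
          * ‖(WithLp.equiv 2 (X × X) p).1 - (WithLp.equiv 2 (X × X) p).2‖ ^ 2) :
    Tendsto (fun n : ℕ =>
        ‖gradient Afun ((WithLp.equiv 2 (X × X)).symm (u (n + 1), u n))‖)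
      atTop (𝓝 0) := by
  have hδt0 : δt ≠ 0 := ne_of_gt hδt
  have hδtL : δt * (3 * L) < 2 := (lt_div_iff₀ (by linarith)).mp hδt2
  have hlamMax0 : 0 ≤ lamMax := le_trans (hlam0 0) (hlamMax 0)
  -- gradient of Hn
  have hgradH : ∀ (n : ℕ) (v : X),
      HasGradientAt (Hn n) (h v + (1 / δt * 2) • (v - u n)) v := by
    intro n v
    have h1 := HGA.add (hH v) (HGA.const_mul (1 / δt) (HGA.normSq (u n) v))
    have h2 : Hn n = fun w => H w + (1 / δt) * ‖w - u n‖ ^ 2 := funext (hHn n)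
    rw [h2]
    simpa [smul_smul] using h1
  -- gradient of Fn
  have hgradF : ∀ (n : ℕ) (v : X),
      HasGradientAt (Fn n)
        ((1 / (3 * δt) * 2) • (v - u (n - 1)) - f v - (f (u n) - f (u (n - 1)))) v := by
    intro n v
    have h1 := HGA.sub (HGA.sub (HGA.const_mul (1 / (3 * δt)) (HGA.normSq (u (n - 1)) v))
      (hF v)) (HGA.inner_const (f (u n) - f (u (n - 1))) (u (n - 1)) v)
    have h2 : Fn n = fun w => (1 / (3 * δt)) * ‖w - u (n - 1)‖ ^ 2 - F w
        - ⟪f (u n) - f (u (n - 1)), w - u (n - 1)⟫ := funext (hFn n)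
    rw [h2]
    simpa [smul_smul] using h1
  -- explicit optimality condition
  have hopt' : ∀ n : ℕ,
      (h (y n) + (1 / δt * 2) • (y n - u n))
        - ((1 / (3 * δt) * 2) • (u n - u (n - 1)) - f (u n) - (f (u n) - f (u (n - 1))))
        + M (y n - u n) = 0 := by
    intro n
    have ho := hopt n
    rwa [(hgradH n (y n)).gradient, (hgradF n (u n)).gradient] at ho
  -- strong convexity of Hn
  have hHnsc : ∀ (n : ℕ) (v w : X),
      Hn n v + ⟪h v + (1 / δt * 2) • (v - u n), w - v⟫ + (1 / δt) * ‖w - v‖ ^ 2 ≤ Hn n w := by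
    intro n v w
    have h1 := convex_grad_ineq hH hHconv v w
    have h2 : ‖w - u n‖ ^ 2 = ‖v - u n‖ ^ 2 + 2 * ⟪v - u n, w - v⟫ + ‖w - v‖ ^ 2 := by
      have h3 : w - u n = (v - u n) + (w - v) := by abel
      rw [h3, norm_add_sq_real]
    rw [hHn n v, hHn n w, h2, inner_add_left]
    rw [real_inner_smul_left]
    nlinarith []
  -- strong convexity of Fn
  have hFnsc : ∀ (n : ℕ) (v w : X),
      Fn n v + ⟪(1 / (3 * δt) * 2) • (v - u (n - 1)) - f v - (f (u n) - f (u (n - 1))), w - v⟫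
        + (1 / (3 * δt) - L / 2) * ‖w - v‖ ^ 2 ≤ Fn n w := by
    intro n v w
    have h1 := descent_lemma hF hL hLip v w
    have h2 : ‖w - u (n - 1)‖ ^ 2
        = ‖v - u (n - 1)‖ ^ 2 + 2 * ⟪v - u (n - 1), w - v⟫ + ‖w - v‖ ^ 2 := by
      have h3 : w - u (n - 1) = (v - u (n - 1)) + (w - v) := by abel
      rw [h3, norm_add_sq_real]
    have h4 : ⟪f (u n) - f (u (n - 1)), w - u (n - 1)⟫
        = ⟪f (u n) - f (u (n - 1)), v - u (n - 1)⟫ + ⟪f (u n) - f (u (n - 1)), w - v⟫ := by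
      rw [← inner_add_right]
      congr 1
      abel
    rw [hFn n v, hFn n w, h2, h4]
    simp only [inner_sub_left, real_inner_smul_left]
    nlinarith []
  -- key decrease: En n (y n) ≤ En n (u n) - K ‖d‖²
  have key1 : ∀ n : ℕ, En n (y n) ≤ En n (u n) - (4 / (3 * δt) - L / 2) * ‖y n - u n‖ ^ 2 := by
    intro n
    have hsc := hHnsc n (y n) (u n)
    have hfc := hFnsc n (u n) (y n)
    have ho := hopt' n
    have hMn := hMpsd (y n - u n)
    have hi : ⟪h (y n) + (1 / δt * 2) • (y n - u n), u n - y n⟫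
        = -⟪h (y n) + (1 / δt * 2) • (y n - u n), y n - u n⟫ := by
      rw [show u n - y n = -(y n - u n) by abel, inner_neg_right]
    have hnrm : ‖u n - y n‖ = ‖y n - u n‖ := norm_sub_rev _ _
    rw [hi, hnrm] at hsc
    have hGhGf : ⟪h (y n) + (1 / δt * 2) • (y n - u n), y n - u n⟫
        - ⟪(1 / (3 * δt) * 2) • (u n - u (n - 1)) - f (u n) - (f (u n) - f (u (n - 1))),
            y n - u n⟫ = -⟪M (y n - u n), y n - u n⟫ := by
      have h2 : (h (y n) + (1 / δt * 2) • (y n - u n))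
          - ((1 / (3 * δt) * 2) • (u n - u (n - 1)) - f (u n) - (f (u n) - f (u (n - 1))))
          = -(M (y n - u n)) := eq_neg_of_add_eq_zero_left ho
      rw [← inner_sub_left, h2, inner_neg_left]
    have hKeq : (1 / δt) * ‖y n - u n‖ ^ 2 + (1 / (3 * δt) - L / 2) * ‖y n - u n‖ ^ 2
        = (4 / (3 * δt) - L / 2) * ‖y n - u n‖ ^ 2 := by
      rw [← add_mul]
      congr 1
      field_simp
      ring
    rw [hEn n (y n), hEn n (u n)]
    linarith [hsc, hfc, hGhGf, hMn, hKeq]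
  -- with line search
  have key2 : ∀ n : ℕ,
      En n (u (n + 1)) ≤ En n (u n) - (4 / (3 * δt) - L / 2) * ‖y n - u n‖ ^ 2 := by
    intro n
    have h1 := hls n
    rw [← hupd n] at h1
    have h2 := key1 n
    have h3 : 0 ≤ α * lam n * ‖y n - u n‖ ^ 2 :=
      mul_nonneg (mul_nonneg hα.le (hlam0 n)) (sq_nonneg _)
    linarith
  have e5g : ∀ n : ℕ, ‖u (n + 1) - u n‖ = (1 + lam n) * ‖y n - u n‖ := by
    intro n
    have h7 : u (n + 1) - u n = (1 + lam n) • (y n - u n) := by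
      rw [hupd n]; module
    rw [h7, norm_smul, Real.norm_eq_abs, abs_of_nonneg (by linarith [hlam0 n])]
  have key3 : ∀ n : ℕ,
      E (u (n + 1)) + (L / 2 + 1 / (3 * δt)) * ‖u (n + 1) - u n‖ ^ 2
        ≤ E (u n) + (L / 2 + 1 / (3 * δt)) * ‖u n - u (n - 1)‖ ^ 2
          - ((4 / (3 * δt) - L / 2) - L * (1 + lamMax) ^ 2) * ‖y n - u n‖ ^ 2 := by
    intro n
    have k2 := key2 n
    simp only [hEn, hHn, hFn, sub_self, norm_zero] at k2
    have e1 : ‖u (n + 1) - u (n - 1)‖ ^ 2 = ‖u n - u (n - 1)‖ ^ 2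
        + 2 * ⟪u n - u (n - 1), u (n + 1) - u n⟫ + ‖u (n + 1) - u n‖ ^ 2 := by
      have h3 : u (n + 1) - u (n - 1) = (u n - u (n - 1)) + (u (n + 1) - u n) := by abel
      rw [h3, norm_add_sq_real]
    have e2 : ⟪f (u n) - f (u (n - 1)), u (n + 1) - u (n - 1)⟫
        = ⟪f (u n) - f (u (n - 1)), u n - u (n - 1)⟫
          + ⟪f (u n) - f (u (n - 1)), u (n + 1) - u n⟫ := by
      rw [← inner_add_right]
      congr 1
      abel
    rw [e1, e2] at k2
    rw [e5g n] at k2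
    have e3 : ⟪u n - u (n - 1), u (n + 1) - u n⟫
        ≤ ‖u n - u (n - 1)‖ * ((1 + lam n) * ‖y n - u n‖) := by
      have h5 := real_inner_le_norm (u n - u (n - 1)) (u (n + 1) - u n)
      rwa [e5g n] at h5
    have m1 := mul_le_mul_of_nonneg_left e3 (show (0:ℝ) ≤ 1 / (3 * δt) * 2 by positivity)
    have h8 : (0:ℝ) ≤ (1 + lam n) * ‖y n - u n‖ :=
      mul_nonneg (by linarith [hlam0 n]) (norm_nonneg _)
    have e4 : -⟪f (u n) - f (u (n - 1)), u (n + 1) - u n⟫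
        ≤ L * ‖u n - u (n - 1)‖ * ((1 + lam n) * ‖y n - u n‖) := by
      have h5 := abs_real_inner_le_norm (f (u n) - f (u (n - 1))) (u (n + 1) - u n)
      rw [e5g n] at h5
      have h6 := hLip (u n) (u (n - 1))
      have h7 := neg_abs_le ⟪f (u n) - f (u (n - 1)), u (n + 1) - u n⟫
      nlinarith [mul_le_mul_of_nonneg_right h6 h8]
    have e9 : (L / 2 + 1 / (3 * δt)) * (2 * (‖u n - u (n - 1)‖ * ((1 + lam n) * ‖y n - u n‖)))
        ≤ (L / 2 + 1 / (3 * δt)) * (‖u n - u (n - 1)‖ ^ 2 + ((1 + lam n) * ‖y n - u n‖) ^ 2) := by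
      have hcc : (0:ℝ) ≤ L / 2 + 1 / (3 * δt) := by positivity
      have h9 : 2 * (‖u n - u (n - 1)‖ * ((1 + lam n) * ‖y n - u n‖))
          ≤ ‖u n - u (n - 1)‖ ^ 2 + ((1 + lam n) * ‖y n - u n‖) ^ 2 := by
        nlinarith [sq_nonneg (‖u n - u (n - 1)‖ - (1 + lam n) * ‖y n - u n‖)]
      exact mul_le_mul_of_nonneg_left h9 hcc
    have e8 : L * ((1 + lam n) * ‖y n - u n‖) ^ 2 ≤ L * ((1 + lamMax) ^ 2 * ‖y n - u n‖ ^ 2) := by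
      have e7 : (1 + lam n) ^ 2 ≤ (1 + lamMax) ^ 2 := by nlinarith [hlam0 n, hlamMax n]
      have h10 := mul_le_mul_of_nonneg_left
        (mul_le_mul_of_nonneg_right e7 (sq_nonneg ‖y n - u n‖)) hL.le
      calc L * ((1 + lam n) * ‖y n - u n‖) ^ 2
          = L * ((1 + lam n) ^ 2 * ‖y n - u n‖ ^ 2) := by ring
        _ ≤ L * ((1 + lamMax) ^ 2 * ‖y n - u n‖ ^ 2) := h10
    rw [hE (u (n + 1)), hE (u n), e5g n]
    rw [show (1:ℝ)/δt = 3 * (1/(3*δt)) by field_simp] at k2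
    rw [show (4:ℝ)/(3*δt) = 4 * (1/(3*δt)) by ring] at k2 ⊢
    generalize (1:ℝ)/(3*δt) = B at k2 m1 e9 ⊢
    linarith [k2, m1, e4, e9, e8]
  have hκ : 0 < (4 / (3 * δt) - L / 2) - L * (1 + lamMax) ^ 2 := by
    have hsqarg : (0:ℝ) ≤ 4 / (3 * δt * L) - 1 / 2 := by
      have h1 : (2:ℝ) < 4 / (3 * δt * L) := by
        rw [lt_div_iff₀ (by positivity)]
        nlinarith [hδtL]
      linarith
    have hsq : (1 + lamMax) ^ 2 < 4 / (3 * δt * L) - 1 / 2 := by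
      have h1 : 1 + lamMax < Real.sqrt (4 / (3 * δt * L) - 1 / 2) := by linarith [hlamBound]
      have h2 : (1 + lamMax) ^ 2 < Real.sqrt (4 / (3 * δt * L) - 1 / 2) ^ 2 :=
        pow_lt_pow_left₀ h1 (by linarith) (by norm_num)
      rwa [Real.sq_sqrt hsqarg] at h2
    have h3 : L * (1 + lamMax) ^ 2 < L * (4 / (3 * δt * L) - 1 / 2) :=
      (mul_lt_mul_iff_right₀ hL).mpr hsq
    have h4 : L * (4 / (3 * δt * L) - 1 / 2) = 4 / (3 * δt) - L / 2 := by
      field_simp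
    linarith
  set A' : ℕ → ℝ := fun n => E (u n) + (L / 2 + 1 / (3 * δt)) * ‖u n - u (n - 1)‖ ^ 2 with hA'
  have key3' : ∀ n : ℕ, A' (n + 1)
      + ((4 / (3 * δt) - L / 2) - L * (1 + lamMax) ^ 2) * ‖y n - u n‖ ^ 2 ≤ A' n := by
    intro n
    have h1 := key3 n
    simp only [hA', Nat.add_sub_cancel]
    linarith
  obtain ⟨mE, hmE⟩ := hEbdd
  have hAlb : ∀ n, mE ≤ A' n := by
    intro n
    have h1 : mE ≤ E (u n) := hmE ⟨u n, rfl⟩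
    have h2 : (0:ℝ) ≤ (L / 2 + 1 / (3 * δt)) * ‖u n - u (n - 1)‖ ^ 2 := by positivity
    simp only [hA']
    linarith
  have hAanti : Antitone A' := by
    apply antitone_nat_of_succ_le
    intro n
    have h1 := key3' n
    have h2 : 0 ≤ ((4 / (3 * δt) - L / 2) - L * (1 + lamMax) ^ 2) * ‖y n - u n‖ ^ 2 :=
      mul_nonneg hκ.le (sq_nonneg _)
    exact le_trans (le_add_of_nonneg_right h2) h1
  have htendA : Tendsto A' atTop (𝓝 (⨅ n, A' n)) :=
    tendsto_atTop_ciInf hAanti ⟨mE, fun x hx => by obtain ⟨n, rfl⟩ := hx; exact hAlb n⟩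
  have htendA1 : Tendsto (fun n => A' (n + 1)) atTop (𝓝 (⨅ n, A' n)) :=
    htendA.comp (tendsto_add_atTop_nat 1)
  have hdiff : Tendsto (fun n => A' n - A' (n + 1)) atTop (𝓝 0) := by
    have h1 := htendA.sub htendA1
    simpa using h1
  have ha2 : Tendsto (fun n => ‖y n - u n‖ ^ 2) atTop (𝓝 0) := by
    have hsq0 : Tendsto (fun n =>
        ((4 / (3 * δt) - L / 2) - L * (1 + lamMax) ^ 2) * ‖y n - u n‖ ^ 2) atTop (𝓝 0) :=
      squeeze_zero (fun n => mul_nonneg hκ.le (sq_nonneg _))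
        (fun n => by linarith [key3' n]) hdiff
    have h3 := hsq0.const_mul ((4 / (3 * δt) - L / 2) - L * (1 + lamMax) ^ 2)⁻¹
    rw [mul_zero] at h3
    refine h3.congr (fun n => ?_)
    rw [inv_mul_cancel_left₀ hκ.ne']
  have ha : Tendsto (fun n => ‖y n - u n‖) atTop (𝓝 0) := by
    have h4 := (Real.continuous_sqrt.tendsto 0).comp ha2
    rw [Real.sqrt_zero] at h4
    exact h4.congr (fun n => Real.sqrt_sq (norm_nonneg _))
  have hS : Tendsto (fun n => ‖u (n + 1) - u n‖) atTop (𝓝 0) := by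
    apply squeeze_zero (g := fun n => (1 + lamMax) * ‖y n - u n‖) (fun n => norm_nonneg _)
    · intro n
      rw [e5g n]
      exact mul_le_mul_of_nonneg_right (by linarith [hlamMax n]) (norm_nonneg _)
    · simpa using ha.const_mul (1 + lamMax)
  have hP : Tendsto (fun n => ‖u n - u (n - 1)‖) atTop (𝓝 0) := by
    rw [← tendsto_add_atTop_iff_nat 1]
    simpa using hS
  have hid2 : ∀ n : ℕ, h (u (n + 1)) + f (u (n + 1))
      = (h (u (n + 1)) - h (y n)) + (f (u (n + 1)) - f (u n))
        + (1 / (3 * δt) * 2) • (u n - u (n - 1)) + (-(f (u n) - f (u (n - 1))))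
        + (-(M (y n - u n))) + (-((1 / δt * 2) • (y n - u n))) := by
    intro n
    have ho := hopt' n
    have h2 : (h (u (n + 1)) + f (u (n + 1)))
        - ((h (u (n + 1)) - h (y n)) + (f (u (n + 1)) - f (u n))
          + (1 / (3 * δt) * 2) • (u n - u (n - 1)) + (-(f (u n) - f (u (n - 1))))
          + (-(M (y n - u n))) + (-((1 / δt * 2) • (y n - u n))))
        = (h (y n) + (1 / δt * 2) • (y n - u n))
          - ((1 / (3 * δt) * 2) • (u n - u (n - 1)) - f (u n) - (f (u n) - f (u (n - 1))))
          + M (y n - u n) := by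
      module
    rw [ho] at h2
    exact sub_eq_zero.mp h2
  have hgE : ∀ n : ℕ, ‖h (u (n + 1)) + f (u (n + 1))‖
      ≤ Lh * lamMax * ‖y n - u n‖ + L * ((1 + lamMax) * ‖y n - u n‖)
        + (1 / (3 * δt) * 2) * ‖u n - u (n - 1)‖ + L * ‖u n - u (n - 1)‖
        + ‖M‖ * ‖y n - u n‖ + (1 / δt * 2) * ‖y n - u n‖ := by
    intro n
    rw [hid2 n]
    refine le_trans (norm_add6_le _ _ _ _ _ _) ?_
    have t1 : ‖h (u (n + 1)) - h (y n)‖ ≤ Lh * lamMax * ‖y n - u n‖ := by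
      have h1 := hhLip (u (n + 1)) (y n)
      have h2 : u (n + 1) - y n = lam n • (y n - u n) := by
        rw [hupd n, add_sub_cancel_left]
      rw [h2, norm_smul, Real.norm_eq_abs, abs_of_nonneg (hlam0 n)] at h1
      have h3 : Lh * (lam n * ‖y n - u n‖) ≤ Lh * (lamMax * ‖y n - u n‖) :=
        mul_le_mul_of_nonneg_left
          (mul_le_mul_of_nonneg_right (hlamMax n) (norm_nonneg _)) hLh
      calc ‖h (u (n + 1)) - h (y n)‖ ≤ Lh * (lam n * ‖y n - u n‖) := h1
        _ ≤ Lh * (lamMax * ‖y n - u n‖) := h3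
        _ = Lh * lamMax * ‖y n - u n‖ := by ring
    have t2 : ‖f (u (n + 1)) - f (u n)‖ ≤ L * ((1 + lamMax) * ‖y n - u n‖) := by
      have h1 := hLip (u (n + 1)) (u n)
      rw [e5g n] at h1
      have h2 : L * ((1 + lam n) * ‖y n - u n‖) ≤ L * ((1 + lamMax) * ‖y n - u n‖) :=
        mul_le_mul_of_nonneg_left
          (mul_le_mul_of_nonneg_right (by linarith [hlamMax n]) (norm_nonneg _)) hL.le
      linarith
    have t3 : ‖(1 / (3 * δt) * 2) • (u n - u (n - 1))‖
        = (1 / (3 * δt) * 2) * ‖u n - u (n - 1)‖ := by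
      rw [norm_smul, Real.norm_eq_abs, abs_of_nonneg (by positivity)]
    have t4 : ‖-(f (u n) - f (u (n - 1)))‖ ≤ L * ‖u n - u (n - 1)‖ := by
      rw [norm_neg]
      exact hLip (u n) (u (n - 1))
    have t5 : ‖-(M (y n - u n))‖ ≤ ‖M‖ * ‖y n - u n‖ := by
      rw [norm_neg]
      exact M.le_opNorm _
    have t6 : ‖-((1 / δt * 2) • (y n - u n))‖ = (1 / δt * 2) * ‖y n - u n‖ := by
      rw [norm_neg, norm_smul, Real.norm_eq_abs, abs_of_nonneg (by positivity)]
    rw [t3, t6]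
    linarith [t1, t2, t4, t5]
  have hgE0 : Tendsto (fun n => ‖h (u (n + 1)) + f (u (n + 1))‖) atTop (𝓝 0) := by
    apply squeeze_zero (fun n => norm_nonneg _) hgE
    have h1 := (((((ha.const_mul (Lh * lamMax)).add
      ((ha.const_mul (1 + lamMax)).const_mul L)).add
      (hP.const_mul (1 / (3 * δt) * 2))).add
      (hP.const_mul L)).add
      (ha.const_mul ‖M‖)).add
      (ha.const_mul (1 / δt * 2))
    simpa using h1
  -- gradient of E
  have hgradE : ∀ v : X, HasGradientAt E (h v + f v) v := by
    intro v
    have h1 := HGA.add (hH v) (hF v)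
    have h2 : E = fun w => H w + F w := funext hE
    rw [h2]
    exact h1
  let e2 : WithLp 2 (X × X) ≃L[ℝ] X × X := WithLp.prodContinuousLinearEquiv 2 ℝ X X
  let fst2 : WithLp 2 (X × X) →L[ℝ] X :=
    (ContinuousLinearMap.fst ℝ X X).comp (e2 : WithLp 2 (X × X) →L[ℝ] X × X)
  let snd2 : WithLp 2 (X × X) →L[ℝ] X :=
    (ContinuousLinearMap.snd ℝ X X).comp (e2 : WithLp 2 (X × X) →L[ℝ] X × X)
  have hfst2 : ∀ p : WithLp 2 (X × X), fst2 p = p.fst := fun p => rfl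
  have hsnd2 : ∀ p : WithLp 2 (X × X), snd2 p = p.snd := fun p => rfl
  have hTsub : ∀ p : WithLp 2 (X × X), (fst2 - snd2) p = p.fst - p.snd := fun p => rfl
  have hAfun2 : Afun = fun p : WithLp 2 (X × X) =>
      E (fst2 p) + (L / 2 + 1 / (3 * δt)) * ‖(fst2 - snd2) p‖ ^ 2 := by
    funext p
    rw [hAfun p]
    rfl
  have hkey_grad : ∀ x1 x2 : X, HasGradientAt Afun
      ((WithLp.equiv 2 (X × X)).symm (h x1 + f x1 + ((L / 2 + 1 / (3 * δt)) * 2) • (x1 - x2),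
        -(((L / 2 + 1 / (3 * δt)) * 2) • (x1 - x2))))
      ((WithLp.equiv 2 (X × X)).symm (x1, x2)) := by
    intro x1 x2
    have hq1 : fst2 ((WithLp.equiv 2 (X × X)).symm (x1, x2)) = x1 := rfl
    have hq2 : (fst2 - snd2) ((WithLp.equiv 2 (X × X)).symm (x1, x2)) = x1 - x2 := rfl
    have hD1 : HasFDerivAt (fun p : WithLp 2 (X × X) => E (fst2 p))
        ((InnerProductSpace.toDual ℝ X (h x1 + f x1)).comp fst2)
        ((WithLp.equiv 2 (X × X)).symm (x1, x2)) := by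
      have hE1 := hasGradientAt_iff_hasFDerivAt.mp (hgradE x1)
      exact HasFDerivAt.comp _ (hq1 ▸ hE1) fst2.hasFDerivAt
    have hφ : HasGradientAt (fun v : X => (L / 2 + 1 / (3 * δt)) * ‖v‖ ^ 2)
        ((L / 2 + 1 / (3 * δt)) • ((2:ℝ) • (x1 - x2))) (x1 - x2) := by
      have h1 := HGA.const_mul (L / 2 + 1 / (3 * δt)) (HGA.normSq (0:X) (x1 - x2))
      simpa using h1
    have hD2 : HasFDerivAt
        (fun p : WithLp 2 (X × X) => (L / 2 + 1 / (3 * δt)) * ‖(fst2 - snd2) p‖ ^ 2)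
        ((InnerProductSpace.toDual ℝ X
          ((L / 2 + 1 / (3 * δt)) • ((2:ℝ) • (x1 - x2)))).comp (fst2 - snd2))
        ((WithLp.equiv 2 (X × X)).symm (x1, x2)) := by
      have hφ' := hasGradientAt_iff_hasFDerivAt.mp hφ
      exact HasFDerivAt.comp _ (hq2 ▸ hφ') (fst2 - snd2).hasFDerivAt
    have hsum := hD1.add hD2
    rw [hasGradientAt_iff_hasFDerivAt, hAfun2]
    refine hsum.congr_fderiv ?_
    ext w
    simp [InnerProductSpace.toDual_apply_apply, WithLp.prod_inner_apply,
      WithLp.equiv_symm_apply, WithLp.toLp_fst, WithLp.toLp_snd, inner_add_left, inner_sub_left,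
      real_inner_smul_left, inner_sub_right, inner_neg_left,
      ContinuousLinearMap.add_apply, ContinuousLinearMap.comp_apply, hfst2, hsnd2, hTsub]
    ring
  have hgradAfun : ∀ n : ℕ, gradient Afun ((WithLp.equiv 2 (X × X)).symm (u (n + 1), u n))
      = (WithLp.equiv 2 (X × X)).symm
          (h (u (n + 1)) + f (u (n + 1))
            + ((L / 2 + 1 / (3 * δt)) * 2) • (u (n + 1) - u n),
          -(((L / 2 + 1 / (3 * δt)) * 2) • (u (n + 1) - u n))) :=
    fun n => (hkey_grad (u (n + 1)) (u n)).gradient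
  apply squeeze_zero (fun n => norm_nonneg _)
    (g := fun n => ‖h (u (n + 1)) + f (u (n + 1))‖
      + ((L / 2 + 1 / (3 * δt)) * 2) * ‖u (n + 1) - u n‖
      + ((L / 2 + 1 / (3 * δt)) * 2) * ‖u (n + 1) - u n‖)
  · intro n
    rw [hgradAfun n]
    refine le_trans (prodL2_norm_le _) ?_
    simp only [WithLp.equiv_symm_apply, WithLp.toLp_fst, WithLp.toLp_snd, norm_neg]
    have hw : ‖((L / 2 + 1 / (3 * δt)) * 2) • (u (n + 1) - u n)‖
        = ((L / 2 + 1 / (3 * δt)) * 2) * ‖u (n + 1) - u n‖ := by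
      rw [norm_smul, Real.norm_eq_abs, abs_of_nonneg (by positivity)]
    have h1 := norm_add_le (h (u (n + 1)) + f (u (n + 1)))
      (((L / 2 + 1 / (3 * δt)) * 2) • (u (n + 1) - u n))
    rw [hw] at h1
    rw [hw]
    linarith [h1]
  · have hfin := (hgE0.add (hS.const_mul ((L / 2 + 1 / (3 * δt)) * 2))).add
      (hS.const_mul ((L / 2 + 1 / (3 * δt)) * 2))
    simpa using hfin
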